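/- There exists θ_0 > 0 such that for every θ with 0 < θ ≤ θ_0, the unique t_θ ∈ (-1,1) satisfying ∫_{-1}^{t_θ} ((1+t)/(1-t))^{θ/π} dt = ∫_{t_θ}^{1} ((1+t)/(1-t))^{θ/π} dt obeys 0 < t_θ ≤ 2θ/π. -/

import Mathlib

open MeasureTheory intervalIntegral Real

namespace BPD

lemma intg {a : ℝ} (ha : 0 < a) (ha1 : a < 1) {c d : ℝ}
    (hc : c ∈ Set.Icc (-1:ℝ) 1) (hd : d ∈ Set.Icc (-1:ℝ) 1) :
    IntervalIntegrable (fun s => ((1 + s) / (1 - s)) ^ a) volume c d := by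
  have big : IntervalIntegrable (fun s => ((1 + s) / (1 - s)) ^ a) volume (-1) 1 := by
    have h1 : IntervalIntegrable (fun x : ℝ => x ^ (-a)) volume 0 2 :=
      intervalIntegral.intervalIntegrable_rpow' (by linarith)
    have h2 : IntervalIntegrable (fun x : ℝ => (1 - x) ^ (-a)) volume (-1) 1 := by
      have h := (h1.comp_sub_left 1).symm
      norm_num at h
      exact h
    have h3 : IntervalIntegrable (fun x : ℝ => 2 ^ a * (1 - x) ^ (-a)) volume (-1) 1 :=
      h2.const_mul _
    apply h3.mono_fun' ?meas
    · rw [Set.uIoc_of_le (by norm_num : (-1:ℝ) ≤ 1)]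
      filter_upwards [ae_restrict_mem measurableSet_Ioc] with s hs
      have hs1 : -1 < s := hs.1
      have hs2 : s ≤ 1 := hs.2
      have hb : 0 ≤ (1 + s) / (1 - s) := div_nonneg (by linarith) (by linarith)
      rw [Real.norm_eq_abs, abs_of_nonneg (Real.rpow_nonneg hb a)]
      rcases eq_or_lt_of_le hs2 with h | h
      · subst h
        simp [Real.zero_rpow ha.ne', Real.zero_rpow (neg_ne_zero.mpr ha.ne')]
      · have hpos : (0:ℝ) < 1 - s := by linarith
        have hle : (1 + s) / (1 - s) ≤ 2 / (1 - s) := by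
          rw [div_le_div_iff₀ hpos hpos]
          nlinarith
        have := Real.rpow_le_rpow hb hle ha.le
        calc ((1 + s) / (1 - s)) ^ a ≤ (2 / (1 - s)) ^ a := this
          _ = 2 ^ a * (1 - s) ^ (-a) := by
              rw [Real.div_rpow (by norm_num) hpos.le, Real.rpow_neg hpos.le,
                div_eq_mul_inv]
    case meas =>
      apply Measurable.aestronglyMeasurable
      fun_prop
  apply big.mono_set
  apply Set.uIcc_subset_uIcc <;> rw [Set.uIcc_of_le (by norm_num : (-1:ℝ) ≤ 1)]
  · exact hc
  · exact hd

lemma f_neg {a s : ℝ} (hs : s ∈ Set.Icc (-1:ℝ) 1) :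
    ((1 + (-s)) / (1 - (-s))) ^ a = (((1 + s) / (1 - s)) ^ a)⁻¹ := by
  have hb : 0 ≤ (1 + s) / (1 - s) :=
    div_nonneg (by linarith [hs.1]) (by linarith [hs.2])
  have h1 : (1 + (-s)) / (1 - (-s)) = ((1 + s) / (1 - s))⁻¹ := by
    rw [inv_div]; ring_nf
  rw [h1, Real.inv_rpow hb]

lemma key_num {a : ℝ} (ha : 0 < a) (ha' : a ≤ 1/100) :
    (2:ℝ) ^ (2*a) / (1 - 2*a) - 1 ≤ 4 * a := by
  have hL1 : Real.log 2 < 0.6931471808 := Real.log_two_lt_d9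
  have hL0 : 0.6931471803 < Real.log 2 := Real.log_two_gt_d9
  set y : ℝ := 2 * a * Real.log 2 with hy
  have hy1 : y < 1 := by nlinarith
  have hy0 : 0 < y := by nlinarith
  have h2a : (2:ℝ) ^ (2*a) = Real.exp y := by
    rw [Real.rpow_def_of_pos (by norm_num : (0:ℝ) < 2)]
    ring_nf
    congr 1
    rw [hy]
    ring
  have hexp : Real.exp y ≤ 1 / (1 - y) := by
    have h := Real.add_one_le_exp (-y)
    rw [Real.exp_neg] at h
    rw [le_div_iff₀ (by linarith)]
    have h2 := mul_le_mul_of_nonneg_right (by linarith : 1 - y ≤ (Real.exp y)⁻¹)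
      (Real.exp_pos y).le
    rwa [inv_mul_cancel₀ (Real.exp_pos y).ne', mul_comm] at h2
  have hkey : (2:ℝ) ^ (2*a) ≤ (1 + 4*a) * (1 - 2*a) := by
    rw [h2a]
    refine hexp.trans ?_
    rw [div_le_iff₀ (by linarith)]
    have hyb : y ≤ 1.4 * a := by nlinarith
    have hp : (0:ℝ) < (1 + 4*a) * (1 - 2*a) := by nlinarith
    have h1 : (1 + 4*a) * (1 - 2*a) * (1 - y) ≥ (1 + 4*a) * (1 - 2*a) * (1 - 1.4*a) :=
      mul_le_mul_of_nonneg_left (by linarith) hp.le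
    nlinarith [mul_pos ha ha, mul_pos (mul_pos ha ha) ha]
  have h12a : (0:ℝ) < 1 - 2*a := by linarith
  rw [sub_le_iff_le_add, div_le_iff₀ h12a]
  nlinarith

lemma main_ineq {a : ℝ} (ha : 0 < a) (ha' : a ≤ 1/100) :
    (∫ s in (2*a)..1, ((1 + s) / (1 - s)) ^ a) ≤
      ∫ s in (-1:ℝ)..(2*a), ((1 + s) / (1 - s)) ^ a := by
  have ha1 : a < 1 := by linarith
  have m2a : 2*a ∈ Set.Icc (-1:ℝ) 1 := ⟨by linarith, by linarith⟩
  have mn2a : -(2*a) ∈ Set.Icc (-1:ℝ) 1 := ⟨by linarith, by linarith⟩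
  have m0 : (0:ℝ) ∈ Set.Icc (-1:ℝ) 1 := by norm_num
  have m1 : (1:ℝ) ∈ Set.Icc (-1:ℝ) 1 := by norm_num
  have mm1 : (-1:ℝ) ∈ Set.Icc (-1:ℝ) 1 := by norm_num
  set F : ℝ → ℝ := fun s => ((1 + s) / (1 - s)) ^ a with hF
  have i1 : IntervalIntegrable F volume (-1) (-(2*a)) := intg ha ha1 mm1 mn2a
  have i2 : IntervalIntegrable F volume (-(2*a)) 0 := intg ha ha1 mn2a m0
  have i3 : IntervalIntegrable F volume 0 (2*a) := intg ha ha1 m0 m2a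
  have i4 : IntervalIntegrable F volume (2*a) 1 := intg ha ha1 m2a m1
  have i5 : IntervalIntegrable F volume (-1) 0 := intg ha ha1 mm1 m0
  -- integrability of reflected function
  have iN3 : IntervalIntegrable (fun s => F (-s)) volume 0 (2*a) := by
    have h := (i2.comp_sub_left 0).symm
    norm_num at h
    exact h
  have iN4 : IntervalIntegrable (fun s => F (-s)) volume (2*a) 1 := by
    have h := (i1.comp_sub_left 0).symm
    norm_num at h
    exact h
  -- splitting
  have e1 : (∫ s in (-1:ℝ)..(-(2*a)), F s) + ∫ s in (-(2*a))..0, F s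
      = ∫ s in (-1:ℝ)..0, F s := integral_add_adjacent_intervals i1 i2
  have e2 : (∫ s in (-1:ℝ)..0, F s) + ∫ s in (0:ℝ)..(2*a), F s
      = ∫ s in (-1:ℝ)..(2*a), F s := integral_add_adjacent_intervals i5 i3
  -- reflections
  have r1 : (∫ s in (2*a)..1, F (-s)) = ∫ s in (-1:ℝ)..(-(2*a)), F s :=
    intervalIntegral.integral_comp_neg (a := 2*a) (b := 1) (f := F)
  have r2 : (∫ s in (0:ℝ)..(2*a), F (-s)) = ∫ s in (-(2*a))..0, F s := by
    have h := intervalIntegral.integral_comp_neg (a := (0:ℝ)) (b := 2*a) (f := F)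
    simpa using h
  -- Claim 1 : 4a ≤ ∫_0^{2a} (F(-s) + F s)
  have claim1 : 4*a ≤ ∫ s in (0:ℝ)..(2*a), (F (-s) + F s) := by
    have hpt : ∀ x ∈ Set.Icc (0:ℝ) (2*a), (2:ℝ) ≤ F (-x) + F x := by
      intro x hx
      have hx1 : x ∈ Set.Icc (-1:ℝ) 1 := ⟨by linarith [hx.1], by linarith [hx.2]⟩
      have hb : 0 < (1 + x) / (1 - x) := by
        apply div_pos <;> [linarith [hx.1]; nlinarith [hx.2]]
      have hu : 0 < F x := Real.rpow_pos_of_pos hb a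
      rw [hF]
      simp only
      rw [f_neg hx1]
      have := mul_inv_cancel₀ (ne_of_gt hu)
      nlinarith [sq_nonneg (F x - 1)]
    have hmono := intervalIntegral.integral_mono_on (by linarith : (0:ℝ) ≤ 2*a)
      intervalIntegrable_const (iN3.add i3) hpt
    rw [intervalIntegral.integral_const] at hmono
    simp at hmono
    linarith
  -- Claim 2 : ∫_{2a}^1 (F s - F (-s)) ≤ 4a
  have iGbase : IntervalIntegrable (fun x : ℝ => (1 - x) ^ (-(2*a))) volume (-1) 1 := by
    have h1 : IntervalIntegrable (fun x : ℝ => x ^ (-(2*a))) volume 0 2 :=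
      intervalIntegral.intervalIntegrable_rpow' (by linarith)
    have h := (h1.comp_sub_left 1).symm
    norm_num at h
    exact h
  have iG : ∀ c d : ℝ, c ∈ Set.Icc (-1:ℝ) 1 → d ∈ Set.Icc (-1:ℝ) 1 →
      IntervalIntegrable (fun x : ℝ => 2 ^ (2*a) * (1 - x) ^ (-(2*a)) - 1) volume c d := by
    intro c d hc hd
    apply IntervalIntegrable.sub ?_ intervalIntegrable_const
    apply (iGbase.const_mul _).mono_set
    apply Set.uIcc_subset_uIcc <;> rw [Set.uIcc_of_le (by norm_num : (-1:ℝ) ≤ 1)]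
    · exact hc
    · exact hd
  have claim2 : (∫ s in (2*a)..1, (F s - F (-s))) ≤ 4*a := by
    have hstep1 : (∫ s in (2*a)..1, (F s - F (-s)))
        ≤ ∫ s in (2*a)..1, (2 ^ (2*a) * (1 - s) ^ (-(2*a)) - 1) := by
      apply intervalIntegral.integral_mono_ae_restrict (by linarith : 2*a ≤ 1)
        (i4.sub iN4) (iG _ _ m2a m1)
      have hne : ∀ᵐ s : ℝ ∂volume, s ≠ (1:ℝ) := by
        rw [ae_iff]
        simp only [ne_eq, not_not, Set.setOf_eq_eq_singleton]
        exact Real.volume_singleton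
      filter_upwards [ae_restrict_mem measurableSet_Icc, ae_restrict_of_ae hne]
        with s hs hs1
      have hs0 : 0 ≤ s := by linarith [hs.1]
      have hslt : s < 1 := lt_of_le_of_ne hs.2 hs1
      have hden : 0 < 1 - s := by linarith
      have hx1 : 1 ≤ (1 + s) / (1 - s) := by
        rw [le_div_iff₀ hden]; linarith
      have hu1 : 1 ≤ F s := Real.one_le_rpow hx1 ha.le
      have hmem : s ∈ Set.Icc (-1:ℝ) 1 := ⟨by linarith, hs.2⟩
      have hFn : F (-s) = (F s)⁻¹ := f_neg hmem
      have hsq : ((1 + s) / (1 - s)) ^ (2*a) = (F s) ^ (2:ℕ) := by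
        rw [hF]
        simp only
        rw [mul_comm 2 a, Real.rpow_mul (by linarith : (0:ℝ) ≤ (1 + s) / (1 - s))]
        rw [Real.rpow_two]
      have hstep_i : F s - F (-s) ≤ ((1 + s) / (1 - s)) ^ (2*a) - 1 := by
        rw [hFn, hsq]
        have hm := mul_inv_cancel₀ (ne_of_gt (lt_of_lt_of_le one_pos hu1))
        have hv : (F s)⁻¹ ≤ 1 := by
          rw [inv_le_one_iff₀]; right; exact hu1
        nlinarith [mul_nonneg (sub_nonneg.2 hu1) (sub_nonneg.2 (hv.trans hu1))]
      have hstep_ii : ((1 + s) / (1 - s)) ^ (2*a) ≤ (2 / (1 - s)) ^ (2*a) := by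
        apply Real.rpow_le_rpow (by linarith : (0:ℝ) ≤ (1 + s) / (1 - s)) ?_
          (by linarith : (0:ℝ) ≤ 2*a)
        rw [div_le_div_iff₀ hden hden]
        nlinarith
      have hstep_iii : (2 / (1 - s)) ^ (2*a) = 2 ^ (2*a) * (1 - s) ^ (-(2*a)) := by
        rw [Real.div_rpow (by norm_num) hden.le, Real.rpow_neg hden.le, div_eq_mul_inv]
      linarith [hstep_i, hstep_ii.trans_eq hstep_iii]
    have hstep2 : (∫ s in (2*a)..1, (2 ^ (2*a) * (1 - s) ^ (-(2*a)) - 1))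
        ≤ ∫ s in (0:ℝ)..1, (2 ^ (2*a) * (1 - s) ^ (-(2*a)) - 1) := by
      have hsplit : (∫ s in (0:ℝ)..(2*a), (2 ^ (2*a) * (1 - s) ^ (-(2*a)) - 1))
          + ∫ s in (2*a)..1, (2 ^ (2*a) * (1 - s) ^ (-(2*a)) - 1)
          = ∫ s in (0:ℝ)..1, (2 ^ (2*a) * (1 - s) ^ (-(2*a)) - 1) :=
        integral_add_adjacent_intervals (iG _ _ m0 m2a) (iG _ _ m2a m1)
      have hnn : 0 ≤ ∫ s in (0:ℝ)..(2*a), (2 ^ (2*a) * (1 - s) ^ (-(2*a)) - 1) := by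
        apply intervalIntegral.integral_nonneg (by linarith : (0:ℝ) ≤ 2*a)
        intro u hu
        have h1 : (1:ℝ) ≤ 2 ^ (2*a) := Real.one_le_rpow one_le_two (by linarith)
        have h2 : (1:ℝ) ≤ (1 - u) ^ (-(2*a)) := by
          apply Real.one_le_rpow_of_pos_of_le_one_of_nonpos
          · nlinarith [hu.2]
          · linarith [hu.1]
          · linarith
        nlinarith
      linarith
    have iH : IntervalIntegrable (fun x : ℝ => 2 ^ (2*a) * (1 - x) ^ (-(2*a))) volume 0 1 := by
      apply (iGbase.const_mul _).mono_set
      apply Set.uIcc_subset_uIcc <;> rw [Set.uIcc_of_le (by norm_num : (-1:ℝ) ≤ 1)]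
      · exact m0
      · exact m1
    have hcomp : (∫ s in (0:ℝ)..1, (1 - s) ^ (-(2*a)))
        = ∫ s in (0:ℝ)..1, s ^ (-(2*a)) := by
      have h := intervalIntegral.integral_comp_sub_left
        (a := (0:ℝ)) (b := 1) (f := fun x : ℝ => x ^ (-(2*a))) 1
      norm_num at h
      exact h
    have hrpow : (∫ s in (0:ℝ)..1, s ^ (-(2*a))) = 1/(1 - 2*a) := by
      rw [integral_rpow (Or.inl (by linarith : (-1:ℝ) < -(2*a)))]
      rw [Real.one_rpow, Real.zero_rpow (by linarith : -(2*a) + 1 ≠ 0)]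
      field_simp
      ring
    have hval : (∫ s in (0:ℝ)..1, (2 ^ (2*a) * (1 - s) ^ (-(2*a)) - 1))
        = 2 ^ (2*a) / (1 - 2*a) - 1 := by
      rw [intervalIntegral.integral_sub iH intervalIntegrable_const,
        intervalIntegral.integral_const_mul, hcomp, hrpow, integral_one]
      ring
    have := key_num ha ha'
    linarith
  -- combine
  have efinal : (∫ s in (2*a)..1, F s)
      = (∫ s in (2*a)..1, F (-s)) + ∫ s in (2*a)..1, (F s - F (-s)) := by
    rw [← intervalIntegral.integral_add iN4 (i4.sub iN4)]
    congr 1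
    ext s
    ring
  have esum : (∫ s in (0:ℝ)..(2*a), (F (-s) + F s))
      = (∫ s in (-(2*a))..0, F s) + ∫ s in (0:ℝ)..(2*a), F s := by
    rw [intervalIntegral.integral_add iN3 i3, r2]
  calc (∫ s in (2*a)..1, F s)
      = (∫ s in (2*a)..1, F (-s)) + ∫ s in (2*a)..1, (F s - F (-s)) := efinal
    _ ≤ (∫ s in (-1:ℝ)..(-(2*a)), F s) + 4*a := by rw [r1]; linarith [claim2]
    _ ≤ (∫ s in (-1:ℝ)..(-(2*a)), F s) + ∫ s in (0:ℝ)..(2*a), (F (-s) + F s) := by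
        linarith [claim1]
    _ = ∫ s in (-1:ℝ)..(2*a), F s := by rw [esum]; linarith [e1, e2]

lemma core {a t : ℝ} (ha : 0 < a) (ha' : a ≤ 1/100) (ht : t ∈ Set.Ioo (-1:ℝ) 1)
    (heq : (∫ s in (-1:ℝ)..t, ((1 + s) / (1 - s)) ^ a)
        = ∫ s in t..(1:ℝ), ((1 + s) / (1 - s)) ^ a) :
    0 < t ∧ t ≤ 2 * a := by
  have ha1 : a < 1 := by linarith
  obtain ⟨ht1, ht2⟩ := ht
  have mt : t ∈ Set.Icc (-1:ℝ) 1 := ⟨ht1.le, ht2.le⟩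
  have m0 : (0:ℝ) ∈ Set.Icc (-1:ℝ) 1 := by norm_num
  have m1 : (1:ℝ) ∈ Set.Icc (-1:ℝ) 1 := by norm_num
  have mm1 : (-1:ℝ) ∈ Set.Icc (-1:ℝ) 1 := by norm_num
  -- strict comparison of the two halves
  have iN : IntervalIntegrable (fun s => ((1 + (-s)) / (1 - (-s))) ^ a) volume 0 1 := by
    have h := ((intg ha ha1 mm1 m0).comp_sub_left 0).symm
    norm_num at h
    have he : (fun s : ℝ => ((1 + (-s)) / (1 - (-s))) ^ a)
        = (fun x : ℝ => ((1 + -x) / (1 + x)) ^ a) := by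
      funext s; congr 1; ring
    rw [he]
    exact h
  have hrefl : (∫ s in (0:ℝ)..1, ((1 + (-s)) / (1 - (-s))) ^ a)
      = ∫ s in (-1:ℝ)..0, ((1 + s) / (1 - s)) ^ a := by
    have h := intervalIntegral.integral_comp_neg (a := (0:ℝ)) (b := 1)
      (f := fun s => ((1 + s) / (1 - s)) ^ a)
    simpa using h
  have hpos01 : (∫ s in (-1:ℝ)..0, ((1 + s) / (1 - s)) ^ a)
      < ∫ s in (0:ℝ)..1, ((1 + s) / (1 - s)) ^ a := by
    have hpos : 0 < ∫ s in (0:ℝ)..1,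
        (((1 + s) / (1 - s)) ^ a - ((1 + (-s)) / (1 - (-s))) ^ a) := by
      apply intervalIntegral_pos_of_pos_on ((intg ha ha1 m0 m1).sub iN) ?_ one_pos
      intro x hx
      have hd : 0 < 1 - x := by linarith [hx.2]
      have hx1 : 1 < (1 + x) / (1 - x) := by
        rw [lt_div_iff₀ hd]; linarith [hx.1]
      have hgt : 1 < ((1 + x) / (1 - x)) ^ a := by
        rw [Real.one_lt_rpow_iff_of_pos (by linarith)]
        exact Or.inl ⟨hx1, ha⟩
      have hmem : x ∈ Set.Icc (-1:ℝ) 1 := ⟨by linarith [hx.1], hx.2.le⟩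
      rw [f_neg hmem]
      have hinv : (((1 + x) / (1 - x)) ^ a)⁻¹ < 1 := by
        rw [inv_lt_one_iff₀]; right; exact hgt
      linarith
    rw [intervalIntegral.integral_sub (intg ha ha1 m0 m1) iN, hrefl] at hpos
    linarith
  have part1 : 0 < t := by
    by_contra h
    push_neg at h
    have it0 : IntervalIntegrable (fun s => ((1 + s) / (1 - s)) ^ a) volume t 0 :=
      intg ha ha1 mt m0
    have e1 := integral_add_adjacent_intervals (intg ha ha1 mm1 mt) it0
    have e2 := integral_add_adjacent_intervals it0 (intg ha ha1 m0 m1)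
    have hnn : 0 ≤ ∫ s in t..0, ((1 + s) / (1 - s)) ^ a := by
      apply intervalIntegral.integral_nonneg h
      intro u hu
      apply Real.rpow_nonneg
      apply div_nonneg
      · linarith [hu.1]
      · linarith [hu.2]
    linarith [hpos01, e1, e2, hnn, heq]
  refine ⟨part1, ?_⟩
  by_contra h
  push_neg at h
  have m2a : 2*a ∈ Set.Icc (-1:ℝ) 1 := ⟨by linarith, by linarith⟩
  have iat : IntervalIntegrable (fun s => ((1 + s) / (1 - s)) ^ a) volume (2*a) t :=
    intg ha ha1 m2a mt
  have e1 := integral_add_adjacent_intervals (intg ha ha1 mm1 m2a) iat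
  have e2 := integral_add_adjacent_intervals iat (intg ha ha1 mt m1)
  have hpos : 0 < ∫ s in (2*a)..t, ((1 + s) / (1 - s)) ^ a := by
    apply intervalIntegral_pos_of_pos_on iat ?_ h
    intro x hx
    apply Real.rpow_pos_of_pos
    apply div_pos
    · have := hx.1; linarith
    · have := hx.2; linarith
  have hmain := main_ineq ha ha'
  linarith [heq, e1, e2, hpos, hmain]

end BPD

/-- There is `θ_0 > 0` so that for `0 < θ ≤ θ_0`, the balancing point `t_θ ∈ (-1,1)` of
`((1+t)/(1-t))^{θ/π}` satisfies `0 < t_θ ≤ 2θ/π`. -/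
theorem balance_point_decay :
    ∃ θ₀ : ℝ, 0 < θ₀ ∧ ∀ θ : ℝ, 0 < θ → θ ≤ θ₀ →
      ∀ t ∈ Set.Ioo (-1 : ℝ) 1,
        (∫ s in (-1 : ℝ)..t, ((1 + s) / (1 - s)) ^ (θ / Real.pi)) =
            (∫ s in t..(1 : ℝ), ((1 + s) / (1 - s)) ^ (θ / Real.pi)) →
          0 < t ∧ t ≤ 2 * θ / Real.pi := by
  refine ⟨Real.pi / 100, by positivity, fun θ hθ hθ' t ht heq => ?_⟩
  have hπ := Real.pi_pos
  have ha : 0 < θ / Real.pi := div_pos hθ hπ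
  have ha' : θ / Real.pi ≤ 1 / 100 := by
    rw [div_le_div_iff₀ hπ (by norm_num)]
    linarith
  obtain ⟨h1, h2⟩ := BPD.core ha ha' ht heq
  exact ⟨h1, by rw [mul_div_assoc]; exact h2⟩
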